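/- For odd e > 1, the sum (1/e)·Σ_{f | e} μ(e/f)·2^f·(2^f − 2) is a nonnegative integer. -/

import Mathlib

open ArithmeticFunction ArithmeticFunction.Moebius Finset


-- Fermat little theorem for integers
lemma fermat_int (p : ℕ) (hp : p.Prime) (b : ℤ) : (p : ℤ) ∣ b ^ p - b := by
  haveI : Fact p.Prime := ⟨hp⟩
  have : ((b ^ p - b : ℤ) : ZMod p) = 0 := by
    push_cast
    rw [ZMod.pow_card]
    ring
  exact (ZMod.intCast_zmod_eq_zero_iff_dvd _ _).mp this

lemma key_pp (p k : ℕ) (hp : p.Prime) (hk : 1 ≤ k) (b : ℤ) :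
    ((p : ℤ) ^ k) ∣ b ^ p ^ k - b ^ p ^ (k - 1) := by
  have h := dvd_sub_pow_of_dvd_sub (R := ℤ) (p := p) (a := b ^ p) (b := b)
    (fermat_int p hp b) (k - 1)
  have hk' : k - 1 + 1 = k := Nat.succ_pred_eq_of_pos hk
  rw [hk'] at h
  rwa [← pow_mul, ← pow_succ', hk'] at h

lemma core_pp (a : ℤ) (p k m : ℕ) (hp : p.Prime) (hk : 1 ≤ k) (hm : 0 < m)
    (hpm : ¬ p ∣ m) :
    ((p : ℤ) ^ k) ∣ ∑ c ∈ (p ^ k * m).divisors, (μ c : ℤ) * a ^ ((p ^ k * m) / c) := by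
  set n := p ^ k * m with hn
  have hp0 : p ≠ 0 := hp.pos.ne'
  have hn0 : n ≠ 0 := by positivity
  have hDsub : m.divisors ∪ m.divisors.image (p * ·) ⊆ n.divisors := by
    intro c hc
    rcases Finset.mem_union.mp hc with h | h
    · rw [Nat.mem_divisors] at h ⊢
      exact ⟨h.1.trans (Dvd.intro_left _ rfl), hn0⟩
    · obtain ⟨c', hc', rfl⟩ := Finset.mem_image.mp h
      rw [Nat.mem_divisors] at hc' ⊢
      refine ⟨mul_dvd_mul ?_ hc'.1, hn0⟩
      exact dvd_pow_self p (by omega)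
  have hsum : ∑ c ∈ n.divisors, (μ c : ℤ) * a ^ (n / c)
      = ∑ c ∈ m.divisors ∪ m.divisors.image (p * ·), (μ c : ℤ) * a ^ (n / c) := by
    refine (Finset.sum_subset hDsub ?_).symm
    intro c hc hcD
    rw [Nat.mem_divisors] at hc
    rcases eq_or_ne (μ c : ℤ) 0 with h0 | h0
    · rw [h0, zero_mul]
    exfalso
    have hsq : Squarefree c := by
      by_contra hs
      exact h0 (by exact_mod_cast moebius_eq_zero_of_not_squarefree hs)
    by_cases hpc : p ∣ c
    · obtain ⟨c', rfl⟩ := hpc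
      have hpc' : ¬ p ∣ c' := fun h =>
        (Nat.squarefree_iff_prime_squarefree.mp hsq p hp) (mul_dvd_mul_left p h)
      have hc'm : c' ∣ m := by
        have h1 : c' ∣ n := (dvd_mul_left c' p).trans hc.1
        have h2 : c'.Coprime (p ^ k) :=
          Nat.Coprime.pow_right _ ((Nat.Prime.coprime_iff_not_dvd hp).mpr hpc').symm
        exact (Nat.Coprime.dvd_of_dvd_mul_left h2 h1)
      exact hcD (Finset.mem_union_right _ (Finset.mem_image.mpr
        ⟨c', Nat.mem_divisors.mpr ⟨hc'm, hm.ne'⟩, rfl⟩))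
    · have h2 : c.Coprime (p ^ k) :=
        Nat.Coprime.pow_right _ ((Nat.Prime.coprime_iff_not_dvd hp).mpr hpc).symm
      have : c ∣ m := Nat.Coprime.dvd_of_dvd_mul_left h2 hc.1
      exact hcD (Finset.mem_union_left _ (Nat.mem_divisors.mpr ⟨this, hm.ne'⟩))
  rw [hsum]
  have hdisj : Disjoint m.divisors (m.divisors.image (p * ·)) := by
    rw [Finset.disjoint_left]
    rintro c hc hc'
    obtain ⟨c', hc', rfl⟩ := Finset.mem_image.mp hc'
    exact hpm ((dvd_mul_right p c').trans (Nat.mem_divisors.mp hc).1)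
  rw [Finset.sum_union hdisj, Finset.sum_image (by
    intro x _ y _ h
    exact Nat.eq_of_mul_eq_mul_left hp.pos h)]
  rw [← Finset.sum_add_distrib]
  apply Finset.dvd_sum
  intro c hc
  obtain ⟨hcm, -⟩ := Nat.mem_divisors.mp hc
  obtain ⟨t, rfl⟩ := hcm
  have hc0 : 0 < c := Nat.pos_of_ne_zero (by rintro rfl; simp at hm)
  have hpc : ¬ p ∣ c := fun h => hpm (h.trans ⟨t, rfl⟩)
  have hmu : (μ (p * c) : ℤ) = - μ c := by
    rw [isMultiplicative_moebius.map_mul_of_coprime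
      ((Nat.Prime.coprime_iff_not_dvd hp).mpr hpc), moebius_apply_prime hp]
    push_cast; ring
  have hdiv1 : n / c = p ^ k * t := by
    rw [hn, mul_comm c t, ← mul_assoc, Nat.mul_div_cancel _ hc0]
  have hdiv2 : n / (p * c) = p ^ (k - 1) * t := by
    have : n = (p * c) * (p ^ (k - 1) * t) := by
      rw [hn]
      have : p ^ k = p * p ^ (k - 1) := by
        rw [← pow_succ']; congr 1; omega
      rw [this]; ring
    rw [this, Nat.mul_div_cancel_left _ (by positivity)]
  rw [hdiv1, hdiv2, hmu]
  have : (μ c : ℤ) * a ^ (p ^ k * t) + (- μ c) * a ^ (p ^ (k - 1) * t)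
      = (μ c : ℤ) * ((a ^ t) ^ p ^ k - (a ^ t) ^ p ^ (k - 1)) := by
    rw [← pow_mul, ← pow_mul, mul_comm t (p ^ k), mul_comm t (p ^ (k - 1))]; ring
  rw [this]
  exact Dvd.dvd.mul_left (key_pp p k hp hk (a ^ t)) _

lemma gauss_cong (a : ℤ) (n : ℕ) (hn : 0 < n) :
    (n : ℤ) ∣ ∑ d ∈ n.divisors, (μ (n / d) : ℤ) * a ^ d := by
  have h1 : ∑ d ∈ n.divisors, (μ (n / d) : ℤ) * a ^ d
      = ∑ c ∈ n.divisors, (μ c : ℤ) * a ^ (n / c) := by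
    rw [← Nat.sum_div_divisors n (fun c => (μ c : ℤ) * a ^ (n / c))]
    refine Finset.sum_congr rfl fun d hd => ?_
    rw [Nat.div_div_self (Nat.mem_divisors.mp hd).1 hn.ne']
  rw [h1]
  set S : ℤ := ∑ c ∈ n.divisors, (μ c : ℤ) * a ^ (n / c) with hS
  rw [Int.natCast_dvd]
  rw [Nat.dvd_iff_prime_pow_dvd_dvd]
  intro p k hpk hdvd
  have hp : p.Prime := hpk
  rcases Nat.eq_zero_or_pos k with rfl | hk
  · simp
  have hKpos : 1 ≤ n.factorization p := by
    have hpn : p ∣ n := dvd_trans (dvd_pow_self p hk.ne') hdvd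
    exact (Nat.Prime.factorization_pos_of_dvd hp hn.ne' hpn)
  have hkK : k ≤ n.factorization p := (Nat.Prime.pow_dvd_iff_le_factorization hp hn.ne').mp hdvd
  refine dvd_trans (pow_dvd_pow p hkK) ?_
  set K := n.factorization p
  set m := n / p ^ K with hm
  have hnm : p ^ K * m = n := Nat.ordProj_mul_ordCompl_eq_self n p
  have hm0 : 0 < m := Nat.ordCompl_pos p hn.ne'
  have hpm : ¬ p ∣ m := Nat.not_dvd_ordCompl hp hn.ne'
  have hdvdS : ((p : ℤ) ^ K) ∣ S := by
    rw [hS, ← hnm]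
    exact core_pp a p K m hp hKpos hm0 hpm
  have := Int.natCast_dvd.mp (by exact_mod_cast hdvdS : ((p ^ K : ℕ) : ℤ) ∣ S)
  exact this

lemma geo_bound (q : ℕ) : ∑ f ∈ Finset.Icc 1 q, (4:ℤ)^f ≤ 4^(q+1) := by
  induction q with
  | zero => simp
  | succ q ih =>
    rw [Finset.sum_Icc_succ_top (by omega)]
    have h1 : (0:ℤ) ≤ 4^(q+1) := by positivity
    have h2 : (4:ℤ)^(q+1+1) = 4 * 4^(q+1) := by ring
    linarith

lemma S_nonneg (e : ℕ) (he : Odd e) (he1 : 1 < e) :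
    0 ≤ ∑ f ∈ e.divisors, (μ (e / f) * 2 ^ f * (2 ^ f - 2) : ℤ) := by
  have he0 : e ≠ 0 := by omega
  have he3 : 3 ≤ e := by
    rcases he with ⟨j, rfl⟩; omega
  rw [← Nat.insert_self_properDivisors he0, Finset.sum_insert Nat.self_notMem_properDivisors]
  have hmain : (μ (e / e) * 2 ^ e * (2 ^ e - 2) : ℤ) = 2 ^ e * (2 ^ e - 2) := by
    rw [Nat.div_self (by omega), moebius_apply_one]; ring
  rw [hmain]
  have hterm : ∀ f ∈ e.properDivisors, -(4:ℤ)^f ≤ (μ (e / f) * 2 ^ f * (2 ^ f - 2) : ℤ) := by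
    intro f hf
    obtain ⟨hfd, hflt⟩ := Nat.mem_properDivisors.mp hf
    have hf1 : 1 ≤ f := Nat.pos_of_dvd_of_pos hfd (by omega)
    have hμ := abs_le.mp (abs_moebius_le_one (n := e / f))
    have h2f : (2:ℤ) ≤ 2^f := by
      calc (2:ℤ) = 2^1 := by ring
      _ ≤ 2^f := pow_le_pow_right₀ (by norm_num) hf1
    have h4f : (4:ℤ)^f = 2^f * 2^f := by rw [← mul_pow]; norm_num
    nlinarith [mul_nonneg (by linarith : (0:ℤ) ≤ (μ (e/f) : ℤ) + 1)
      (by nlinarith : (0:ℤ) ≤ 2^f * (2^f - 2)), pow_pos (show (0:ℤ) < 2 by norm_num) f]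
  have hsub : e.properDivisors ⊆ Finset.Icc 1 (e / 3) := by
    intro f hf
    obtain ⟨hfd, hflt⟩ := Nat.mem_properDivisors.mp hf
    have hf1 : 1 ≤ f := Nat.pos_of_dvd_of_pos hfd (by omega)
    obtain ⟨t, rfl⟩ := hfd
    have ht1 : 1 < t := by
      rcases Nat.lt_or_ge t 2 with h | h
      · interval_cases t <;> omega
      · omega
    have hto : Odd t := (Nat.odd_mul.mp he).2
    have ht3 : 3 ≤ t := by
      rcases hto with ⟨j, rfl⟩; omega
    have : f * 3 ≤ f * t := Nat.mul_le_mul_left f ht3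
    refine Finset.mem_Icc.mpr ⟨hf1, ?_⟩
    rw [Nat.le_div_iff_mul_le (by norm_num)]
    exact this
  have hsum1 : -∑ f ∈ Finset.Icc 1 (e/3), (4:ℤ)^f
      ≤ ∑ f ∈ e.properDivisors, (μ (e / f) * 2 ^ f * (2 ^ f - 2) : ℤ) := by
    calc -∑ f ∈ Finset.Icc 1 (e/3), (4:ℤ)^f
        ≤ -∑ f ∈ e.properDivisors, (4:ℤ)^f := by
          apply neg_le_neg
          exact Finset.sum_le_sum_of_subset_of_nonneg hsub (fun i _ _ => by positivity)
      _ = ∑ f ∈ e.properDivisors, (-(4:ℤ)^f) := by rw [Finset.sum_neg_distrib]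
      _ ≤ _ := Finset.sum_le_sum hterm
  have hgeo := geo_bound (e/3)
  have hq : 2 * (e/3 + 1) ≤ 2*e - 2 := by omega
  have h4 : (4:ℤ)^(e/3+1) = 2^(2*(e/3+1)) := by
    rw [pow_mul]; norm_num
  have hcmp : (2:ℤ)^(2*(e/3+1)) ≤ 2^(2*e-2) := pow_le_pow_right₀ (by norm_num) hq
  have he1' : e + 1 ≤ 2*e - 2 := by omega
  have hcmp2 : (2:ℤ)^(e+1) ≤ 2^(2*e-2) := pow_le_pow_right₀ (by norm_num) he1'
  have hsplit : (2:ℤ)^e * (2^e - 2) = 2^(2*e) - 2^(e+1) := by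
    rw [two_mul, pow_add, pow_succ]; ring
  have h2e : (2:ℤ)^(2*e) = 4 * 2^(2*e-2) := by
    calc (2:ℤ)^(2*e) = 2^((2*e-2)+2) := by congr 1; omega
      _ = 4 * 2^(2*e-2) := by rw [pow_add]; ring
  have hX : (0:ℤ) ≤ 2^(2*e-2) := by positivity
  linarith


open ArithmeticFunction ArithmeticFunction.Moebius in
theorem hecke4_count_nonneg_integer (e : ℕ) (he : Odd e) (he1 : 1 < e) :
    ∃ n : ℕ, ∑ f ∈ e.divisors, (μ (e / f) * 2 ^ f * (2 ^ f - 2) : ℤ) = e * n := by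
  have hepos : 0 < e := by omega
  have hsplit : ∑ f ∈ e.divisors, (μ (e / f) * 2 ^ f * (2 ^ f - 2) : ℤ)
      = (∑ f ∈ e.divisors, (μ (e / f) : ℤ) * 4 ^ f)
        - 2 * ∑ f ∈ e.divisors, (μ (e / f) : ℤ) * 2 ^ f := by
    rw [Finset.mul_sum, ← Finset.sum_sub_distrib]
    refine Finset.sum_congr rfl fun f _ => ?_
    have h4 : (4:ℤ)^f = 2^f * 2^f := by rw [← mul_pow]; norm_num
    rw [h4]; ring
  have hdvd : (e : ℤ) ∣ ∑ f ∈ e.divisors, (μ (e / f) * 2 ^ f * (2 ^ f - 2) : ℤ) := by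
    rw [hsplit]
    exact dvd_sub (gauss_cong 4 e hepos) ((gauss_cong 2 e hepos).mul_left 2)
  obtain ⟨c, hc⟩ := hdvd
  have hnn := S_nonneg e he he1
  have hc0 : 0 ≤ c := by
    by_contra h
    push_neg at h
    have : (e:ℤ) * c < 0 := mul_neg_of_pos_of_neg (by exact_mod_cast hepos) h
    rw [← hc] at this
    linarith
  refine ⟨c.toNat, ?_⟩
  rw [hc, Int.toNat_of_nonneg hc0]
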